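/- arXiv:math/0509615 — 3 statements merged into one kernel-verified Lean document; each statement's English description precedes it below -/
import Mathlib

section
/- Let $X$ and $Y$ be complexifications of real Banach spaces $X_\mathbb{R}$ and $Y_\mathbb{R}$, let $G \subset X$ be open and connected with $G \cap X_\mathbb{R} \ne \emptyset$, and let $f: G \to Y$ be holomorphic. If $f$ vanishes on $G \cap X_\mathbb{R}$, then $f$ is identically zero on $G$. -/
/-- A conjugation on a complex Banach space `X`, exhibiting `X` as the
    complexification of its real subspace of fixed points: an additive,
    complex-antilinear, involutive isometry. -/
structure Conjugation (X : Type*) [NormedAddCommGroup X] [NormedSpace ℂ X] where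
  toFun : X → X
  map_add : ∀ x y : X, toFun (x + y) = toFun x + toFun y
  map_smul : ∀ (c : ℂ) (x : X), toFun (c • x) = (starRingEnd ℂ c) • toFun x
  invol : ∀ x : X, toFun (toFun x) = x
  isom : ∀ x : X, ‖toFun x‖ = ‖x‖

/-- Propagation of vanishing along complex lines: if `f` is holomorphic on `G`,
`ball x ρ ⊆ G`, and `f` vanishes near some `y ∈ ball x (ρ/2)`, then `f` vanishes on
all of `ball x (ρ/2)`. -/
lemma vanish_propagate {X Y : Type*} [NormedAddCommGroup X] [NormedSpace ℂ X]
    [NormedAddCommGroup Y] [NormedSpace ℂ Y] [CompleteSpace Y]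
    {G : Set X} {f : X → Y} (hf : DifferentiableOn ℂ f G)
    {x : X} {ρ : ℝ} (hρ : Metric.ball x ρ ⊆ G)
    {y : X} (hy : y ∈ Metric.ball x (ρ / 2)) (hy0 : ∀ᶠ z in nhds y, f z = 0) :
    ∀ w ∈ Metric.ball x (ρ / 2), f w = 0 := by
  intro w hw
  set v : X := w - y with hv
  set φ : ℂ → X := fun z => z • v + y with hφ
  have hφcont : Continuous φ := by
    apply Continuous.add _ continuous_const
    exact continuous_id.smul continuous_const
  set D : Set ℂ := φ ⁻¹' Metric.ball x ρ with hD
  have hDopen : IsOpen D := Metric.isOpen_ball.preimage hφcont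
  have hDconv : Convex ℝ D := by
    intro z₁ h₁ z₂ h₂ a b ha hb hab
    have key : φ (a • z₁ + b • z₂) = a • φ z₁ + b • φ z₂ := by
      have h' : a • y + b • y = y := Convex.combo_self hab y
      simp only [hφ, smul_add, add_smul, smul_assoc]
      conv_lhs => rw [← h']
      abel
    show φ (a • z₁ + b • z₂) ∈ Metric.ball x ρ
    rw [key]
    exact (convex_ball x ρ) h₁ h₂ ha hb hab
  have hhalf : Metric.ball x (ρ / 2) ⊆ Metric.ball x ρ :=
    Metric.ball_subset_ball (by linarith [Metric.pos_of_mem_ball hy])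
  have h0D : (0 : ℂ) ∈ D := by
    show φ 0 ∈ Metric.ball x ρ
    simp only [hφ, zero_smul, zero_add]
    exact hhalf hy
  have h1D : (1 : ℂ) ∈ D := by
    show φ 1 ∈ Metric.ball x ρ
    simp only [hφ, one_smul, hv, sub_add_cancel]
    exact hhalf hw
  set g : ℂ → Y := fun z => f (φ z) with hg
  have hgdiff : DifferentiableOn ℂ g D :=
    hf.comp (((differentiable_id.smul_const v).add_const y).differentiableOn)
      (fun z hz => hρ hz)
  have hgan : AnalyticOnNhd ℂ g D := hgdiff.analyticOnNhd hDopen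
  have hev : g =ᶠ[nhds (0 : ℂ)] 0 := by
    have h0 : Filter.Tendsto φ (nhds (0 : ℂ)) (nhds y) := by
      have : φ 0 = y := by simp [hφ]
      exact this ▸ hφcont.tendsto 0
    filter_upwards [h0.eventually hy0] with z hz
    exact hz
  have := hgan.eqOn_zero_of_preconnected_of_eventuallyEq_zero hDconv.isPreconnected h0D hev h1D
  simpa [hg, hφ, hv, sub_add_cancel] using this

/-- Identity theorem: a holomorphic function on a connected open set meeting the real
    subspace which vanishes on the real points vanishes identically. -/
theorem stmt3 {X Y : Type*} [NormedAddCommGroup X] [NormedSpace ℂ X] [CompleteSpace X]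
    [NormedAddCommGroup Y] [NormedSpace ℂ Y] [CompleteSpace Y]
    (σ : Conjugation X) (G : Set X) (hGo : IsOpen G) (hGc : IsConnected G)
    (hne : (G ∩ {x | σ.toFun x = x}).Nonempty)
    (f : X → Y) (hf : DifferentiableOn ℂ f G)
    (hz : ∀ x ∈ G ∩ {x | σ.toFun x = x}, f x = 0) :
    ∀ x ∈ G, f x = 0 := by
  obtain ⟨x₀, hx₀G, hx₀fix⟩ := hne
  have hfix : σ.toFun x₀ = x₀ := hx₀fix
  have hσneg : ∀ x, σ.toFun (-x) = -σ.toFun x := fun x => by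
    have := σ.map_smul (-1) x; simpa using this
  have hσsub : ∀ x y, σ.toFun (x - y) = σ.toFun x - σ.toFun y := fun x y => by
    rw [sub_eq_add_neg, σ.map_add, hσneg, sub_eq_add_neg]
  obtain ⟨r, hr, hball⟩ := Metric.isOpen_iff.mp hGo x₀ hx₀G
  -- Step 1: f vanishes on a ball around the real point x₀.
  have hloc : ∀ x ∈ Metric.ball x₀ (r / 3), f x = 0 := by
    intro x hx
    have hdist : ‖x - x₀‖ < r / 3 := by
      rw [← dist_eq_norm]; exact Metric.mem_ball.mp hx
    have hσdist : ‖σ.toFun x - x₀‖ < r / 3 := by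
      have : σ.toFun x - x₀ = σ.toFun (x - x₀) := by rw [hσsub, hfix]
      rw [this, σ.isom]; exact hdist
    set a : X := ((1 : ℂ) / 2) • (x + σ.toFun x) with ha
    set b : X := (-Complex.I / 2) • (x - σ.toFun x) with hb
    have hσa : σ.toFun a = a := by
      rw [ha, σ.map_smul, σ.map_add, σ.invol]
      simp [add_comm, map_ofNat]
    have hσb : σ.toFun b = b := by
      rw [hb, σ.map_smul, hσsub, σ.invol]
      have h1 : (starRingEnd ℂ) (-Complex.I / 2) = Complex.I / 2 := by
        rw [map_div₀, map_neg, Complex.conj_I, map_ofNat]; ring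
      rw [h1]
      have : (Complex.I / 2) • (σ.toFun x - x) = (-Complex.I / 2) • (x - σ.toFun x) := by
        rw [smul_sub, smul_sub]
        module
      rw [this]
    have hx_eq : a + Complex.I • b = x := by
      rw [ha, hb, smul_smul]
      have h2 : Complex.I * (-Complex.I / 2) = 1 / 2 := by
        rw [neg_div, mul_neg, mul_div_assoc', Complex.I_mul_I]
        norm_num
      rw [h2, smul_add, smul_sub]
      module
    have hna : ‖a - x₀‖ < r / 3 := by
      have heq : a - x₀ = ((1 : ℂ) / 2) • ((x - x₀) + (σ.toFun x - x₀)) := by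
        rw [ha, smul_add, smul_add, smul_sub, smul_sub]
        module
      rw [heq, norm_smul]
      have h12 : ‖(1 : ℂ) / 2‖ = 1 / 2 := by simp
      rw [h12]
      calc 1 / 2 * ‖x - x₀ + (σ.toFun x - x₀)‖
          ≤ 1 / 2 * (‖x - x₀‖ + ‖σ.toFun x - x₀‖) := by
            gcongr; exact norm_add_le _ _
        _ < 1 / 2 * (r / 3 + r / 3) := by gcongr
        _ = r / 3 := by ring
    have hnb : ‖b‖ < r / 3 := by
      rw [hb, norm_smul]
      have h3 : ‖(-Complex.I / 2 : ℂ)‖ = 1 / 2 := by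
        simp [norm_div]
      rw [h3]
      calc 1 / 2 * ‖x - σ.toFun x‖
          ≤ 1 / 2 * (‖x - x₀‖ + ‖σ.toFun x - x₀‖) := by
            gcongr
            calc ‖x - σ.toFun x‖ = ‖(x - x₀) - (σ.toFun x - x₀)‖ := by abel_nf
              _ ≤ ‖x - x₀‖ + ‖σ.toFun x - x₀‖ := norm_sub_le _ _
        _ < 1 / 2 * (r / 3 + r / 3) := by gcongr
        _ = r / 3 := by ring
    have hmaps : Set.MapsTo (fun z : ℂ => a + z • b) (Metric.ball (0 : ℂ) 2) G := by
      intro z hzb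
      apply hball
      rw [Metric.mem_ball, dist_eq_norm]
      have hz2 : ‖z‖ < 2 := by simpa [dist_eq_norm] using hzb
      calc ‖a + z • b - x₀‖ = ‖(a - x₀) + z • b‖ := by abel_nf
        _ ≤ ‖a - x₀‖ + ‖z‖ * ‖b‖ := by
            refine le_trans (norm_add_le _ _) ?_
            rw [norm_smul]
        _ ≤ ‖a - x₀‖ + 2 * ‖b‖ := by
            have hz2' : ‖z‖ ≤ 2 := hz2.le
            gcongr
        _ < r / 3 + 2 * (r / 3) := by gcongr
        _ = r := by ring
    set g : ℂ → Y := fun z => f (a + z • b) with hg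
    have hgdiff : DifferentiableOn ℂ g (Metric.ball (0 : ℂ) 2) :=
      hf.comp ((differentiable_id.smul_const b).const_add a).differentiableOn hmaps
    have hgan : AnalyticOnNhd ℂ g (Metric.ball (0 : ℂ) 2) :=
      hgdiff.analyticOnNhd Metric.isOpen_ball
    have hreal : ∀ t : ℝ, |t| < 2 → g (t : ℂ) = 0 := by
      intro t ht
      have hmem : ((t : ℂ)) ∈ Metric.ball (0 : ℂ) 2 := by
        simp [Metric.mem_ball, dist_eq_norm, ht]
      apply hz
      refine ⟨hmaps hmem, ?_⟩
      show σ.toFun (a + (t : ℂ) • b) = a + (t : ℂ) • b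
      rw [σ.map_add, hσa, σ.map_smul, hσb, Complex.conj_ofReal]
    have hfreq : ∃ᶠ z in nhdsWithin (0 : ℂ) {(0 : ℂ)}ᶜ, g z = 0 := by
      have htend : Filter.Tendsto (fun n : ℕ => ((1 / (n + 1) : ℝ) : ℂ))
          Filter.atTop (nhdsWithin (0 : ℂ) {(0 : ℂ)}ᶜ) := by
        rw [tendsto_nhdsWithin_iff]
        constructor
        · have := Complex.continuous_ofReal.tendsto (0 : ℝ)
          simpa [Function.comp_def] using this.comp tendsto_one_div_add_atTop_nhds_zero_nat
        · filter_upwards with n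
          simp only [Set.mem_compl_iff, Set.mem_singleton_iff]
          intro hc
          have h0 : (1 / (n + 1) : ℝ) = 0 := by exact_mod_cast hc
          have hpos : (0 : ℝ) < 1 / (n + 1) := by positivity
          linarith
      refine htend.frequently (Filter.Eventually.frequently ?_)
      filter_upwards with n
      apply hreal
      rw [abs_of_pos (by positivity)]
      have hpos : (0 : ℝ) < (n : ℝ) + 1 := by positivity
      rw [div_lt_iff₀ hpos]
      nlinarith
    have hgzero : Set.EqOn g 0 (Metric.ball (0 : ℂ) 2) :=
      hgan.eqOn_zero_of_preconnected_of_frequently_eq_zero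
        (convex_ball (0 : ℂ) 2).isPreconnected
        (Metric.mem_ball_self (by norm_num)) hfreq
    have hI : Complex.I ∈ Metric.ball (0 : ℂ) 2 := by
      simp [Metric.mem_ball, dist_eq_norm]
    have hgI := hgzero hI
    rw [hg] at hgI
    simpa [hx_eq] using hgI
  -- Step 2: clopen argument using propagation along complex lines.
  set U : Set X := {x | ∀ᶠ y in nhds x, f y = 0} with hU
  have hUopen : IsOpen U := isOpen_setOf_eventually_nhds
  have hUne : (G ∩ U).Nonempty := by
    refine ⟨x₀, hx₀G, ?_⟩
    filter_upwards [Metric.ball_mem_nhds x₀ (by positivity : (0:ℝ) < r / 3)] with y hy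
    exact hloc y hy
  have hclos : closure U ∩ G ⊆ U := by
    rintro x ⟨hxcl, hxG⟩
    obtain ⟨ρ, hρpos, hρball⟩ := Metric.isOpen_iff.mp hGo x hxG
    obtain ⟨y, hyU, hyd⟩ := Metric.mem_closure_iff.mp hxcl (ρ / 2) (by positivity)
    have hyb : y ∈ Metric.ball x (ρ / 2) := by
      rw [Metric.mem_ball, dist_comm]; exact hyd
    have := vanish_propagate hf hρball hyb hyU
    show ∀ᶠ z in nhds x, f z = 0
    filter_upwards [Metric.ball_mem_nhds x (by positivity : (0:ℝ) < ρ / 2)] with w hw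
    exact this w hw
  have hsub : G ⊆ U :=
    hGc.isPreconnected.subset_of_closure_inter_subset hUopen hUne hclos
  intro x hx
  exact (hsub hx).self_of_nhds
end

section
/- Let $X$ be a complex Banach space, $G \subset X$ open, and $u: P \to \mathbb{R}$ defined on an open set $P \supset G$ by $u(x) = \min(1, \|\Im x\|/\mathrm{dist}(x, \partial G))$ for $x \in G$ and $u(x) = 1$ otherwise, where $X$ is a complexification and $(P\setminus G)\cap X_\mathbb{R} = \emptyset$. Then $u$ is locally Lipschitz on $P$. -/
open scoped Classical

section aux
variable {X : Type*} [NormedAddCommGroup X] [NormedSpace ℂ X]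

lemma Conjugation.map_sub (σ : Conjugation X) (y z : X) :
    σ.toFun (y - z) = σ.toFun y - σ.toFun z := by
  have hneg : σ.toFun (-z) = -σ.toFun z := by
    have := σ.map_smul (-1) z
    simpa using this
  rw [sub_eq_add_neg, σ.map_add, hneg, sub_eq_add_neg]

lemma norm_two_I_inv : ‖((2 * Complex.I)⁻¹ : ℂ)‖ = 1 / 2 := by
  simp [norm_inv]

lemma im_lip (σ : Conjugation X) (y z : X) :
    ‖((2 * Complex.I)⁻¹ : ℂ) • (y - σ.toFun y) - ((2 * Complex.I)⁻¹ : ℂ) • (z - σ.toFun z)‖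
      ≤ dist y z := by
  rw [← smul_sub, norm_smul, norm_two_I_inv]
  have h1 : (y - σ.toFun y) - (z - σ.toFun z) = (y - z) - σ.toFun (y - z) := by
    rw [σ.map_sub]; abel
  rw [h1]
  have h2 : ‖(y - z) - σ.toFun (y - z)‖ ≤ ‖y - z‖ + ‖σ.toFun (y - z)‖ := norm_sub_le _ _
  rw [σ.isom] at h2
  rw [dist_eq_norm]
  linarith

end aux

/-- The function `u(x) = min(1, ‖Im x‖ / dist(x, ∂G))` on `G`, `u = 1` off `G`, is
    locally Lipschitz on `P`, where `G ⊆ P` are open and `(P \ G) ∩ X_ℝ = ∅`.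
    Here `Im x = (x - conj x)/(2i)`. -/
theorem stmt13 {X : Type*} [NormedAddCommGroup X] [NormedSpace ℂ X] [CompleteSpace X]
    (σ : Conjugation X) (G P : Set X) (hG : IsOpen G) (hP : IsOpen P) (hGP : G ⊆ P)
    (hreal : (P \ G) ∩ {x | σ.toFun x = x} = ∅) :
    ∀ x ∈ P, ∃ (K : NNReal) (ε : ℝ), 0 < ε ∧
      LipschitzOnWith K
        (fun y => if y ∈ G then
            min 1 (‖((2 * Complex.I)⁻¹ : ℂ) • (y - σ.toFun y)‖ / Metric.infDist y Gᶜ)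
          else 1)
        (Metric.ball x ε ∩ P) := by
  intro x hx
  set Im : X → X := fun y => ((2 * Complex.I)⁻¹ : ℂ) • (y - σ.toFun y) with hIm
  set f : X → ℝ := fun y => if y ∈ G then min 1 (‖Im y‖ / Metric.infDist y Gᶜ) else 1 with hf
  by_cases hxG : x ∈ G
  · by_cases hGc : Gᶜ = (∅ : Set X)
    · refine ⟨1, 1, one_pos, LipschitzOnWith.of_dist_le_mul fun y hy z hz => ?_⟩
      have hyG : y ∈ G := by
        by_contra h; exact (Set.eq_empty_iff_forall_notMem.1 hGc y) h
      have hzG : z ∈ G := by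
        by_contra h; exact (Set.eq_empty_iff_forall_notMem.1 hGc z) h
      have h1 : f y = 0 := by
        simp only [hf, if_pos hyG, hGc, Metric.infDist_empty, div_zero, min_eq_right zero_le_one]
      have h2 : f z = 0 := by
        simp only [hf, if_pos hzG, hGc, Metric.infDist_empty, div_zero, min_eq_right zero_le_one]
      rw [h1, h2]
      simp [dist_nonneg]
    · have hGcne : (Gᶜ : Set X).Nonempty := Set.nonempty_iff_ne_empty.2 hGc
      set d := Metric.infDist x Gᶜ with hd
      have hd0 : 0 < d :=
        (hG.isClosed_compl.notMem_iff_infDist_pos hGcne).1 (by simpa using hxG)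
      set C := ‖Im x‖ + d with hC
      have hC0 : 0 < C := by positivity
      refine ⟨Real.toNNReal (2 / d + 4 * C / d ^ 2), d / 2, by positivity,
        LipschitzOnWith.of_dist_le_mul fun y hy z hz => ?_⟩
      have hyb : dist y x < d / 2 := hy.1
      have hzb : dist z x < d / 2 := hz.1
      have key : ∀ w : X, dist w x < d / 2 →
          d / 2 ≤ Metric.infDist w Gᶜ ∧ ‖Im w‖ ≤ C ∧ w ∈ G := by
        intro w hw
        have h1 : d ≤ Metric.infDist w Gᶜ + dist x w := Metric.infDist_le_infDist_add_dist
        rw [dist_comm] at h1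
        have h3 : ‖Im w‖ - ‖Im x‖ ≤ ‖Im w - Im x‖ := norm_sub_norm_le _ _
        have h4 : ‖Im w - Im x‖ ≤ dist w x := im_lip σ w x
        have hwG : w ∈ G := by
          by_contra hwG
          have h0 : Metric.infDist w Gᶜ = 0 := Metric.infDist_zero_of_mem hwG
          rw [h0] at h1; linarith
        exact ⟨by linarith, by linarith, hwG⟩
      obtain ⟨hby, hay, hyG⟩ := key y hyb
      obtain ⟨hbz, haz, hzG⟩ := key z hzb
      have hby0 : 0 < Metric.infDist y Gᶜ := by linarith
      have hbz0 : 0 < Metric.infDist z Gᶜ := by linarith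
      have hab : |Metric.infDist y Gᶜ - Metric.infDist z Gᶜ| ≤ dist y z := by
        rw [abs_le]
        constructor
        · have := Metric.infDist_le_infDist_add_dist (x := z) (y := y) (s := Gᶜ)
          rw [dist_comm] at this; linarith
        · have := Metric.infDist_le_infDist_add_dist (x := y) (y := z) (s := Gᶜ)
          linarith
      have haa : |‖Im y‖ - ‖Im z‖| ≤ dist y z :=
        le_trans (abs_norm_sub_norm_le _ _) (im_lip σ y z)
      set a := ‖Im y‖ with ha
      set a' := ‖Im z‖ with ha'
      set b := Metric.infDist y Gᶜ with hb
      set b' := Metric.infDist z Gᶜ with hb'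
      have ha'0 : (0:ℝ) ≤ a' := norm_nonneg _
      have step1 : |a / b - a' / b'| ≤ |a - a'| / b + a' * |b - b'| / (b * b') := by
        have heq : a / b - a' / b' = (a - a') / b + a' * (b' - b) / (b * b') := by
          field_simp
          ring
        rw [heq]
        refine (abs_add_le _ _).trans ?_
        rw [abs_div, abs_div, abs_mul, abs_of_pos hby0, abs_of_pos (mul_pos hby0 hbz0),
          abs_of_nonneg ha'0, abs_sub_comm b' b]
      have step2 : |a - a'| / b ≤ dist y z / (d / 2) := by
        gcongr
      have step3 : a' * |b - b'| / (b * b') ≤ C * dist y z / (d / 2 * (d / 2)) := by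
        gcongr
      have heq2 : dist y z / (d / 2) + C * dist y z / (d / 2 * (d / 2))
          = (2 / d + 4 * C / d ^ 2) * dist y z := by
        field_simp
        ring
      rw [Real.dist_eq]
      have hmin : |f y - f z| ≤ |a / b - a' / b'| := by
        simp only [hf, if_pos hyG, if_pos hzG]
        calc |min 1 (a / b) - min 1 (a' / b')| ≤ max |1 - 1| |a / b - a' / b'| :=
              abs_min_sub_min_le_max _ _ _ _
          _ = |a / b - a' / b'| := by simp [abs_nonneg]
      calc |f y - f z| ≤ |a / b - a' / b'| := hmin
        _ ≤ dist y z / (d / 2) + C * dist y z / (d / 2 * (d / 2)) :=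
            step1.trans (add_le_add step2 step3)
        _ = (2 / d + 4 * C / d ^ 2) * dist y z := heq2
        _ ≤ (Real.toNNReal (2 / d + 4 * C / d ^ 2) : ℝ) * dist y z := by
            rw [Real.coe_toNNReal _ (by positivity)]
  · have hσx : σ.toFun x ≠ x := by
      intro h
      have hmem : x ∈ (P \ G) ∩ {x | σ.toFun x = x} := ⟨⟨hx, hxG⟩, h⟩
      rw [hreal] at hmem; exact hmem
    have hc0 : 0 < ‖Im x‖ := by
      rw [norm_pos_iff]
      simp only [hIm, smul_ne_zero_iff, sub_ne_zero]
      constructor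
      · simp [Complex.I_ne_zero]
      · exact fun h => hσx h.symm
    set c := ‖Im x‖ with hc
    refine ⟨1, c / 3, by positivity, LipschitzOnWith.of_dist_le_mul fun y hy z hz => ?_⟩
    have hconst : ∀ w ∈ Metric.ball x (c / 3) ∩ P, f w = 1 := by
      intro w hw
      by_cases hwG : w ∈ G
      · have hxc : x ∈ (Gᶜ : Set X) := hxG
        have hble : Metric.infDist w Gᶜ ≤ dist w x := Metric.infDist_le_dist_of_mem hxc
        have hbw : dist w x < c / 3 := hw.1
        have ha : c - dist w x ≤ ‖Im w‖ := by
          have h1 : ‖Im x‖ - ‖Im w‖ ≤ ‖Im x - Im w‖ := norm_sub_norm_le _ _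
          have h2 : ‖Im x - Im w‖ ≤ dist x w := im_lip σ x w
          rw [dist_comm] at h2
          linarith
        have hb0 : 0 < Metric.infDist w Gᶜ :=
          (hG.isClosed_compl.notMem_iff_infDist_pos ⟨x, hxc⟩).1 (by simpa using hwG)
        have hge : 1 ≤ ‖Im w‖ / Metric.infDist w Gᶜ := by
          rw [le_div_iff₀ hb0, one_mul]
          linarith
        simp [hf, if_pos hwG, min_eq_left hge]
      · simp [hf, if_neg hwG]
    rw [Real.dist_eq, hconst y hy, hconst z hz]
    simp [dist_nonneg]
end

section
/- Let $X$ be a complex Banach space with norm such that conjugation is defined (a complexified space), and let $B = B(a; r)$ be an open ball with $\overline{B} \cap \overline{\mathrm{conj}(B)} = \emptyset$, so that $\|\Im a\| > r$. Let $V$ be a complexified Banach space, $u$ a function on $B \cup \mathrm{conj}(B)$ with Lipschitz constant $K > 0$ there, with $u \le 0$ on $X_\mathbb{R}$ (vacuously since $\overline B \cap X_\mathbb{R} = \emptyset$), and fix $x_0 = a$. Define $f(x) = \frac{|u(x_0)| + |u(\overline{x_0})| + Kr}{\|\Im x_0\| - r}\, x$. Then $f$ is complex linear, of real type, and $\|\Im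 f(x)\| \ge u(x)$ for all $x \in B \cup \mathrm{conj}(B)$. -/
/-- Domination on a ball disjoint from its conjugate: with
    `c = (|u(a)| + |u(conj a)| + Kr)/(‖Im a‖ - r)` and `f(x) = c x`, one has
    `‖Im a‖ > r`, `f` is of real type, and `u ≤ ‖Im f‖` on `B ∪ conj(B)`.
    Here `Im x = (x - conj x)/(2i)`. -/
theorem stmt15 {X : Type*} [NormedAddCommGroup X] [NormedSpace ℂ X] [CompleteSpace X]
    (σ : Conjugation X) (a : X) (r K : ℝ) (hr : 0 < r) (hK : 0 < K)
    (hdisj : closure (Metric.ball a r) ∩ closure (σ.toFun '' Metric.ball a r) = ∅)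
    (u : X → ℝ)
    (hu : LipschitzOnWith (Real.toNNReal K) u
      (Metric.ball a r ∪ σ.toFun '' Metric.ball a r))
    (huneg : ∀ x ∈ Metric.ball a r ∪ σ.toFun '' Metric.ball a r,
      σ.toFun x = x → u x ≤ 0) :
    ‖((2 * Complex.I)⁻¹ : ℂ) • (a - σ.toFun a)‖ > r ∧
    (∀ x : X,
      (((|u a| + |u (σ.toFun a)| + K * r) /
          (‖((2 * Complex.I)⁻¹ : ℂ) • (a - σ.toFun a)‖ - r) : ℝ) : ℂ) • σ.toFun x =
        σ.toFun ((((|u a| + |u (σ.toFun a)| + K * r) /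
          (‖((2 * Complex.I)⁻¹ : ℂ) • (a - σ.toFun a)‖ - r) : ℝ) : ℂ) • x)) ∧
    (∀ x ∈ Metric.ball a r ∪ σ.toFun '' Metric.ball a r,
      u x ≤ ‖((2 * Complex.I)⁻¹ : ℂ) •
        (((((|u a| + |u (σ.toFun a)| + K * r) /
            (‖((2 * Complex.I)⁻¹ : ℂ) • (a - σ.toFun a)‖ - r) : ℝ) : ℂ) • x) -
         σ.toFun ((((|u a| + |u (σ.toFun a)| + K * r) /
            (‖((2 * Complex.I)⁻¹ : ℂ) • (a - σ.toFun a)‖ - r) : ℝ) : ℂ) • x))‖) := by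
  have hσsub : ∀ x y : X, σ.toFun (x - y) = σ.toFun x - σ.toFun y := by
    intro x y
    have h := σ.map_add (x - y) y
    rw [sub_add_cancel] at h
    rw [eq_sub_iff_add_eq, ← h]
  have hnormI : ‖((2 * Complex.I)⁻¹ : ℂ)‖ = 2⁻¹ := by
    simp [norm_inv]
  have hIm : ∀ v : X, ‖((2 * Complex.I)⁻¹ : ℂ) • v‖ = 2⁻¹ * ‖v‖ := by
    intro v; rw [norm_smul, hnormI]
  -- image of ball under σ
  have himg : σ.toFun '' Metric.ball a r = Metric.ball (σ.toFun a) r := by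
    ext z
    simp only [Set.mem_image, Metric.mem_ball, dist_eq_norm]
    constructor
    · rintro ⟨y, hy, rfl⟩
      rw [← hσsub, σ.isom]; exact hy
    · intro hz
      refine ⟨σ.toFun z, ?_, σ.invol z⟩
      calc ‖σ.toFun z - a‖ = ‖σ.toFun z - σ.toFun (σ.toFun a)‖ := by rw [σ.invol]
        _ = ‖σ.toFun (z - σ.toFun a)‖ := by rw [hσsub]
        _ = ‖z - σ.toFun a‖ := σ.isom _
        _ < r := hz
  -- `‖a - σ a‖ > 2r`
  have h2r : 2 * r < ‖a - σ.toFun a‖ := by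
    by_contra h
    push_neg at h
    set m := (2⁻¹ : ℝ) • (a + σ.toFun a) with hm
    have hm1 : m ∈ closure (Metric.ball a r) := by
      rw [closure_ball a hr.ne']
      rw [Metric.mem_closedBall, dist_eq_norm]
      have : m - a = (2⁻¹ : ℝ) • (σ.toFun a - a) := by rw [hm]; module
      rw [this, norm_smul, ← norm_sub_rev a]
      simp only [norm_inv, Real.norm_ofNat]
      nlinarith [norm_nonneg (a - σ.toFun a)]
    have hm2 : m ∈ closure (σ.toFun '' Metric.ball a r) := by
      rw [himg, closure_ball _ hr.ne']
      rw [Metric.mem_closedBall, dist_eq_norm]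
      have : m - σ.toFun a = (2⁻¹ : ℝ) • (a - σ.toFun a) := by rw [hm]; module
      rw [this, norm_smul]
      simp only [norm_inv, Real.norm_ofNat]
      nlinarith [norm_nonneg (a - σ.toFun a)]
    have : m ∈ (∅ : Set X) := hdisj ▸ ⟨hm1, hm2⟩
    exact this
  have hda : r < ‖((2 * Complex.I)⁻¹ : ℂ) • (a - σ.toFun a)‖ := by
    rw [hIm]; linarith
  set d : ℝ := ‖((2 * Complex.I)⁻¹ : ℂ) • (a - σ.toFun a)‖ with hd
  set N : ℝ := |u a| + |u (σ.toFun a)| + K * r with hN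
  set c : ℝ := N / (d - r) with hc
  have hdr : 0 < d - r := by linarith
  have hN0 : 0 < N := by
    rw [hN]; positivity
  have hc0 : 0 ≤ c := by positivity
  -- real type
  have hreal : ∀ x : X, ((c : ℂ)) • σ.toFun x = σ.toFun ((c : ℂ) • x) := by
    intro x
    rw [σ.map_smul, Complex.conj_ofReal]
  refine ⟨hda, hreal, ?_⟩
  intro x hx
  -- upper bound on u x
  have hua : a ∈ Metric.ball a r ∪ σ.toFun '' Metric.ball a r :=
    Or.inl (Metric.mem_ball_self hr)
  have huσa : σ.toFun a ∈ Metric.ball a r ∪ σ.toFun '' Metric.ball a r :=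
    Or.inr ⟨a, Metric.mem_ball_self hr, rfl⟩
  have huxN : u x ≤ N := by
    have hKnn : (Real.toNNReal K : ℝ) = K := Real.coe_toNNReal K hK.le
    rcases hx with hx | hx
    · have h2 : dist (u x) (u a) ≤ K * dist x a := by
        have := hu.dist_le_mul x (Or.inl hx) a hua
        rwa [hKnn] at this
      have h3 : |u x - u a| ≤ K * r := by
        rw [Real.dist_eq] at h2
        have h4 : dist x a ≤ r := le_of_lt (Metric.mem_ball.1 hx)
        nlinarith [dist_nonneg (x := x) (y := a)]
      have := abs_le.1 h3
      rw [hN]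
      nlinarith [abs_nonneg (u (σ.toFun a)), le_abs_self (u a)]
    · have hx' : x ∈ Metric.ball (σ.toFun a) r := himg ▸ hx
      have h2 : dist (u x) (u (σ.toFun a)) ≤ K * dist x (σ.toFun a) := by
        have := hu.dist_le_mul x (Or.inr hx) (σ.toFun a) huσa
        rwa [hKnn] at this
      have h3 : |u x - u (σ.toFun a)| ≤ K * r := by
        rw [Real.dist_eq] at h2
        have h4 : dist x (σ.toFun a) ≤ r := le_of_lt (Metric.mem_ball.1 hx')
        nlinarith [dist_nonneg (x := x) (y := σ.toFun a)]
      have := abs_le.1 h3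
      rw [hN]
      nlinarith [abs_nonneg (u a), le_abs_self (u (σ.toFun a))]
  -- lower bound on ‖Im x‖
  have hImball : ∀ y ∈ Metric.ball a r, d - r ≤ ‖((2 * Complex.I)⁻¹ : ℂ) • (y - σ.toFun y)‖ := by
    intro y hy
    have hdiff : ((2 * Complex.I)⁻¹ : ℂ) • (a - σ.toFun a) -
        ((2 * Complex.I)⁻¹ : ℂ) • (y - σ.toFun y)
        = ((2 * Complex.I)⁻¹ : ℂ) • ((a - y) - σ.toFun (a - y)) := by
      rw [hσsub]; rw [← smul_sub]; congr 1; abel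
    have hbound : ‖((2 * Complex.I)⁻¹ : ℂ) • (a - σ.toFun a) -
        ((2 * Complex.I)⁻¹ : ℂ) • (y - σ.toFun y)‖ ≤ r := by
      rw [hdiff, hIm]
      have h1 : ‖(a - y) - σ.toFun (a - y)‖ ≤ ‖a - y‖ + ‖σ.toFun (a - y)‖ :=
        norm_sub_le _ _
      rw [σ.isom] at h1
      have h2 : ‖a - y‖ < r := by
        rw [Metric.mem_ball, dist_eq_norm, ← norm_sub_rev] at hy; exact hy
      linarith
    have := norm_sub_norm_le (((2 * Complex.I)⁻¹ : ℂ) • (a - σ.toFun a))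
      (((2 * Complex.I)⁻¹ : ℂ) • (y - σ.toFun y))
    rw [← hd] at this
    linarith
  have hImx : d - r ≤ ‖((2 * Complex.I)⁻¹ : ℂ) • (x - σ.toFun x)‖ := by
    rcases hx with hx | hx
    · exact hImball x hx
    · rcases hx with ⟨y, hy, rfl⟩
      have : σ.toFun y - σ.toFun (σ.toFun y) = -(y - σ.toFun y) := by
        rw [σ.invol]; abel
      rw [this, smul_neg, norm_neg]
      exact hImball y hy
  -- conclude
  have hkey : ((2 * Complex.I)⁻¹ : ℂ) • ((c : ℂ) • x - σ.toFun ((c : ℂ) • x))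
      = c • (((2 * Complex.I)⁻¹ : ℂ) • (x - σ.toFun x)) := by
    rw [← hreal x, ← smul_sub, smul_comm]
    norm_cast
  rw [hkey, norm_smul, Real.norm_eq_abs, abs_of_nonneg hc0]
  have : N = c * (d - r) := by
    rw [hc, div_mul_cancel₀ _ hdr.ne']
  calc u x ≤ N := huxN
    _ = c * (d - r) := this
    _ ≤ c * ‖((2 * Complex.I)⁻¹ : ℂ) • (x - σ.toFun x)‖ :=
        mul_le_mul_of_nonneg_left hImx hc0
end
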